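/- Let L be a semivalid representation of a connected graph G, β a broken cone of the fan P(L), S(β) = N(supp(β)) and R(β) = V \ (supp(β) ∪ S(β)). Then for every x ∈ L with x vanishing on S(β), x also vanishes on R(β). -/
import Mathlib


open Matrix Set

variable {V : Type*} [Fintype V] [DecidableEq V]

/-- Positive support of a vector. -/
def posSupp (x : V → ℝ) : Set V := {v | 0 < x v}

/-- Negative support of a vector. -/
def negSupp (x : V → ℝ) : Set V := {v | x v < 0}

/-- Support of a vector. -/
def supp (x : V → ℝ) : Set V := {v | x v ≠ 0}

/-- External neighborhood of a set of vertices. -/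
def nbhd (G : SimpleGraph V) (S : Set V) : Set V := {v | v ∉ S ∧ ∃ u ∈ S, G.Adj u v}

/-- Number of connected components of the subgraph induced by `S`. -/
noncomputable def compCount (G : SimpleGraph V) (S : Set V) : ℕ :=
  Nat.card (G.induce S).ConnectedComponent

/-- `C` is (the vertex set of) a connected component of the subgraph induced by `S`. -/
def IsComponentOf (G : SimpleGraph V) (S C : Set V) : Prop :=
  ∃ K : (G.induce S).ConnectedComponent, C = Subtype.val '' K.supp

/-- `M ∈ M(G)`: a real symmetric matrix with exactly one negative eigenvalue
(counted with multiplicity), negative entries on edges and zero off-diagonal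
entries on non-edges. -/
structure CdVMatrix (G : SimpleGraph V) (M : Matrix V V ℝ) : Prop where
  herm : M.IsHermitian
  edge_neg : ∀ u v, G.Adj u v → M u v < 0
  nonedge_zero : ∀ u v, u ≠ v → ¬ G.Adj u v → M u v = 0
  one_neg : {i | herm.eigenvalues i < 0}.ncard = 1

/-- Semivalid representation of a graph: conditions (i)-(iv). -/
def Semivalid (G : SimpleGraph V) (L : Submodule ℝ (V → ℝ)) : Prop :=
  ∀ x ∈ L, x ≠ 0 →
    ((posSupp x).Nonempty ∧ (negSupp x).Nonempty) ∧
    ((G.induce (posSupp x)).Connected ∨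
      (compCount G (posSupp x) = 2 ∧ (G.induce (negSupp x)).Connected)) ∧
    ((∀ y ∈ L, y ≠ 0 → supp y ⊆ supp x → supp y = supp x) →
      (G.induce (posSupp x)).Connected ∧ (G.induce (negSupp x)).Connected) ∧
    (¬ (G.induce (posSupp x)).Connected →
      (∀ u ∈ posSupp x, ∀ v ∈ negSupp x, ¬ G.Adj u v) ∧
      (∀ C : Set V, IsComponentOf G (supp x) C → nbhd G C = nbhd G (supp x)))

/-- The sign-pattern cone of `x` in `L` (a relatively open cone of the fan `P(L)`). -/
def signCone (L : Submodule ℝ (V → ℝ)) (x : V → ℝ) : Set (V → ℝ) :=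
  {y | y ∈ L ∧ posSupp y = posSupp x ∧ negSupp y = negSupp x}

/-- The dimension of the cone of `x`, i.e. the dimension of its linear span. -/
noncomputable def coneDim (L : Submodule ℝ (V → ℝ)) (x : V → ℝ) : ℕ :=
  Module.finrank ℝ (Submodule.span ℝ (signCone L x))

/-- The graph parameter η: maximal dimension of a semivalid representation. -/
noncomputable def etaParam (G : SimpleGraph V) : ℕ :=
  sSup {n | ∃ L : Submodule ℝ (V → ℝ), Semivalid G L ∧ Module.finrank ℝ L = n}

/-- Valid representation of a graph. -/
def Valid (G : SimpleGraph V) (X : Submodule ℝ (V → ℝ)) : Prop :=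
  ∀ x ∈ X, x ≠ 0 → (G.induce (posSupp x)).Connected

/-- The graph parameter λ: maximal dimension of a valid representation. -/
noncomputable def lambdaParam (G : SimpleGraph V) : ℕ :=
  sSup {n | ∃ X : Submodule ℝ (V → ℝ), Valid G X ∧ Module.finrank ℝ X = n}

/-- The Strong Arnold hypothesis. -/
def SAH (G : SimpleGraph V) (M : Matrix V V ℝ) : Prop :=
  ∀ X : Matrix V V ℝ, X.IsSymm → (∀ u v, (u = v ∨ G.Adj u v) → X u v = 0) →
    M * X = 0 → X = 0

/-- The Colin de Verdière parameter μ. -/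
noncomputable def muParam (G : SimpleGraph V) : ℕ :=
  sSup {n | ∃ M : Matrix V V ℝ, CdVMatrix G M ∧ SAH G M ∧
    Module.finrank ℝ (LinearMap.ker M.mulVecLin) = n}

omit [Fintype V] [DecidableEq V] in
/-- Walks in the graph induced on `A ∪ B` starting in `A` stay in `A`
when there are no edges between `A` and `B`. -/
lemma walk_stays (G : SimpleGraph V) (A B : Set V)
    (hno : ∀ a ∈ A, ∀ b ∈ B, ¬ G.Adj a b) :
    ∀ {a b : ↑(A ∪ B)}, (G.induce (A ∪ B)).Walk a b → a.1 ∈ A →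
      ∃ hb : b.1 ∈ A, ∀ ha : a.1 ∈ A, (G.induce A).Reachable ⟨a.1, ha⟩ ⟨b.1, hb⟩ := by
  intro a b w
  induction w with
  | nil => intro ha; exact ⟨ha, fun _ => SimpleGraph.Reachable.refl _⟩
  | @cons a c b h p ih =>
    intro ha
    have hadj : G.Adj a.1 c.1 := h
    have hcA : c.1 ∈ A := by
      rcases c.2 with h' | h'
      · exact h'
      · exact absurd hadj (hno a.1 ha c.1 h')
    obtain ⟨hb, hr⟩ := ih hcA
    refine ⟨hb, fun ha' => ?_⟩
    exact (SimpleGraph.Adj.reachable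
      (show (G.induce A).Adj ⟨a.1, ha'⟩ ⟨c.1, hcA⟩ from hadj)).trans (hr hcA)

/-- Core of statement 5: a contradiction is derived when `x` is negative at a
vertex of `R(β)`. -/
lemma stmt5_core (G : SimpleGraph V) (L : Submodule ℝ (V → ℝ))
    (hL : Semivalid G L) (y : V → ℝ) (hy : y ∈ L) (hy0 : y ≠ 0)
    (hbroken : ¬ (G.induce (posSupp y)).Connected)
    (x : V → ℝ) (hx : x ∈ L) (hS : ∀ v ∈ nbhd G (supp y), x v = 0)
    (v : V) (hv : v ∉ supp y ∪ nbhd G (supp y)) (hneg : x v < 0) : False := by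
  classical
  rw [Set.mem_union] at hv
  push_neg at hv
  obtain ⟨hv1, hv2⟩ := hv
  -- choose the scaling factor t
  set t : ℝ := 1 + ∑ w, |x w| / |y w| with ht_def
  have ht : ∀ w, y w ≠ 0 → |x w| < t * |y w| := by
    intro w hyw
    have h1 : |x w| / |y w| < t := by
      have h2 := Finset.single_le_sum (f := fun w => |x w| / |y w|)
        (fun i _ => by positivity) (Finset.mem_univ w)
      simp only [ht_def]; linarith
    exact (div_lt_iff₀ (abs_pos.2 hyw)).1 h1
  set u : V → ℝ := x + t • y with hu_def
  have hu_mem : u ∈ L := L.add_mem hx (L.smul_mem t hy)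
  have hu_app : ∀ w, u w = x w + t * y w := fun w => rfl
  -- sign facts
  have hupos : ∀ w, 0 < y w → 0 < u w := by
    intro w hw
    have h1 := ht w (ne_of_gt hw)
    have h2 := neg_abs_le (x w)
    rw [abs_of_pos hw] at h1
    rw [hu_app]; linarith
  have huneg : ∀ w, y w < 0 → u w < 0 := by
    intro w hw
    have h1 := ht w (ne_of_lt hw)
    have h2 := le_abs_self (x w)
    rw [abs_of_neg hw] at h1
    rw [hu_app]; linarith
  have huR : ∀ w, w ∉ supp y → u w = x w := by
    intro w hw
    have : y w = 0 := by simpa [supp] using hw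
    rw [hu_app, this]; ring
  -- the parts of u's support outside supp y
  set P : Set V := {w | w ∉ supp y ∧ 0 < x w} with hP_def
  set N : Set V := {w | w ∉ supp y ∧ x w < 0} with hN_def
  have hpos_eq : posSupp u = posSupp y ∪ P := by
    ext w
    simp only [posSupp, Set.mem_union, Set.mem_setOf_eq, hP_def]
    constructor
    · intro hw
      by_cases hws : w ∈ supp y
      · have hyw : y w ≠ 0 := hws
        rcases hyw.lt_or_gt with h' | h'
        · exact absurd hw (not_lt.2 (le_of_lt (huneg w h')))
        · exact Or.inl h'
      · exact Or.inr ⟨hws, (huR w hws) ▸ hw⟩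
    · rintro (hw | ⟨hw1, hw2⟩)
      · exact hupos w hw
      · rw [huR w hw1]; exact hw2
  have hneg_eq : negSupp u = negSupp y ∪ N := by
    ext w
    simp only [negSupp, Set.mem_union, Set.mem_setOf_eq, hN_def]
    constructor
    · intro hw
      by_cases hws : w ∈ supp y
      · have hyw : y w ≠ 0 := hws
        rcases hyw.lt_or_gt with h' | h'
        · exact Or.inl h'
        · exact absurd hw (not_lt.2 (le_of_lt (hupos w h')))
      · exact Or.inr ⟨hws, (huR w hws) ▸ hw⟩
    · rintro (hw | ⟨hw1, hw2⟩)
      · exact huneg w hw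
      · rw [huR w hw1]; exact hw2
  -- no edges between supp y and the part outside supp y ∪ S
  have hE1 : ∀ a ∈ supp y, ∀ b, b ∉ supp y → x b ≠ 0 → ¬ G.Adj a b := by
    intro a ha b hb hxb hadj
    exact hxb (hS b ⟨hb, a, ha, hadj⟩)
  have hnoP : ∀ a ∈ posSupp y, ∀ b ∈ P, ¬ G.Adj a b := by
    intro a ha b hb
    exact hE1 a (ne_of_gt ha) b hb.1 (ne_of_gt hb.2)
  have hnoN : ∀ a ∈ negSupp y, ∀ b ∈ N, ¬ G.Adj a b := by
    intro a ha b hb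
    exact hE1 a (ne_of_lt ha) b hb.1 (ne_of_lt hb.2)
  -- basic facts about y
  obtain ⟨⟨⟨p0, hp0⟩, ⟨n0, hn0⟩⟩, _, _, _⟩ := hL y hy hy0
  have hu0 : u ≠ 0 := by
    intro h
    have := hupos p0 hp0
    rw [congrFun h p0] at this
    exact lt_irrefl 0 this
  obtain ⟨_, hconn2, _, _⟩ := hL u hu_mem hu0
  rcases hconn2 with hconn | ⟨_, hconn⟩
  · -- positive support of u would be connected, contradicting brokenness
    rw [hpos_eq] at hconn
    have hnp : ¬ (G.induce (posSupp y)).Preconnected := fun hp =>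
      hbroken (haveI : Nonempty ↑(posSupp y) := ⟨⟨p0, hp0⟩⟩; ⟨hp⟩)
    rw [SimpleGraph.Preconnected] at hnp
    push_neg at hnp
    obtain ⟨a, b, hnr⟩ := hnp
    have hreach := hconn.preconnected ⟨a.1, Or.inl a.2⟩ ⟨b.1, Or.inl b.2⟩
    obtain ⟨w⟩ := hreach
    obtain ⟨hb, hr⟩ := walk_stays G (posSupp y) P hnoP w a.2
    have : (G.induce (posSupp y)).Reachable a b := by
      have h := hr a.2
      rwa [show (⟨a.1, a.2⟩ : ↑(posSupp y)) = a from rfl,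
        show (⟨b.1, hb⟩ : ↑(posSupp y)) = b from rfl] at h
    exact hnr this
  · -- negative support of u would be connected, but it is split by S
    rw [hneg_eq] at hconn
    have hvN : v ∈ N := ⟨hv1, hneg⟩
    have hreach := hconn.preconnected ⟨n0, Or.inl hn0⟩ ⟨v, Or.inr hvN⟩
    obtain ⟨w⟩ := hreach
    obtain ⟨hb, -⟩ := walk_stays G (negSupp y) N hnoN w hn0
    exact hv1 (ne_of_lt hb)

/-- for a broken cone `β = signCone L y`, with `S(β) = N(supp(β))` and
`R(β) = V \ (supp(β) ∪ S(β))`, every `x ∈ L` vanishing on `S(β)` also vanishes on `R(β)`. -/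
theorem stmt5 (G : SimpleGraph V) (hG : G.Connected) (L : Submodule ℝ (V → ℝ))
    (hL : Semivalid G L) (y : V → ℝ) (hy : y ∈ L) (hy0 : y ≠ 0)
    (hbroken : ¬ (G.induce (posSupp y)).Connected)
    (x : V → ℝ) (hx : x ∈ L) (hS : ∀ v ∈ nbhd G (supp y), x v = 0) :
    ∀ v, v ∉ supp y ∪ nbhd G (supp y) → x v = 0 := by
  intro v hv
  by_contra hxv
  rcases lt_or_gt_of_ne hxv with h | h
  · exact stmt5_core G L hL y hy hy0 hbroken x hx hS v hv h
  · refine stmt5_core G L hL y hy hy0 hbroken (-x) (L.neg_mem hx)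
      (fun w hw => by simp [hS w hw]) v hv ?_
    simpa using h
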